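/- Let n ≥ 1, let R = (R_1, …, R_{n−1}) be a family of subsets of {1, …, n+1}, and let S be an R-admissible sequence. Then |Mut(S)| = n(n+1)/2 + |Sing(S)|. -/

import Mathlib

/-- `S` is an `R`-admissible sequence. -/
def RAdmissible (n : ℕ) (R S : ℕ → Finset ℕ) : Prop :=
  (∀ t, 1 ≤ t → t ≤ n - 1 → R t ⊆ Finset.Icc 1 (n + 1)) ∧
  (∀ i, 1 ≤ i → i ≤ n → S i ⊆ Finset.Icc 1 (n + 1) ∧ (S i).card = i) ∧
  (∀ i, 1 ≤ i → i ≤ n - 1 → S i ⊆ S (i + 1) ∪ R i)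

/-- A mutation of `S` from row `i` to row `j`, given by columns `a ≤ b`. -/
def IsMut (n : ℕ) (R S : ℕ → Finset ℕ) (i j a b : ℕ) : Prop :=
  1 ≤ a ∧ a ≤ b ∧ b ≤ n ∧
  (∀ t, a ≤ t → t ≤ b → i ∈ S t) ∧ (∀ t, a ≤ t → t ≤ b - 1 → i ∉ R t) ∧
  (a = 1 ∨ i ∉ S (a - 1) ∨ i ∈ R (a - 1)) ∧
  (∀ t, a ≤ t → t ≤ b → j ∉ S t) ∧ (∀ t, a ≤ t → t ≤ b - 1 → j ∉ R t) ∧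
  (b = n ∨ j ∈ S (b + 1) ∨ j ∈ R b)

/-- The set `Mut(S)` of all mutations of `S`, as triples `(i, j, (a, b))`. -/
def Mut (n : ℕ) (R S : ℕ → Finset ℕ) : Set (ℕ × ℕ × ℕ × ℕ) :=
  {q | q.1 ∈ Finset.Icc 1 (n + 1) ∧ q.2.1 ∈ Finset.Icc 1 (n + 1) ∧ q.1 ≠ q.2.1 ∧
       IsMut n R S q.1 q.2.1 q.2.2.1 q.2.2.2}

/-- `(j, h+1) ∈ Sing_i(S)`. -/
def SingCond (n : ℕ) (R S : ℕ → Finset ℕ) (i j h : ℕ) : Prop :=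
  h ∈ Finset.Icc 1 (n - 1) ∧ i ∈ R h ∧ j ∉ S (h + 1) ∧
  ∃ k, k ≤ h ∧ k ∈ Finset.Icc 1 (n - 1) ∧ j ∈ R k ∧
    (∀ t, k ≤ t → t ≤ h → i ∈ S t) ∧ (∀ t, k ≤ t → t ≤ h - 1 → i ∉ R t)

/-- `Sing(S)`: the disjoint union of the `Sing_i(S)`, as triples `(i, j, h+1)`. -/
def Sing (n : ℕ) (R S : ℕ → Finset ℕ) : Set (ℕ × ℕ × ℕ) :=
  {p | p.1 ∈ Finset.Icc 1 (n + 1) ∧ ∃ h, p.2.2 = h + 1 ∧ SingCond n R S p.1 p.2.1 h}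

namespace AdmMut

open Finset

def ipres (R S : ℕ → Finset ℕ) (i a b : ℕ) : Prop :=
  (∀ t, a ≤ t → t ≤ b → i ∈ S t) ∧ (∀ t, a ≤ t → t ≤ b - 1 → i ∉ R t)

def jab (R S : ℕ → Finset ℕ) (j a b : ℕ) : Prop :=
  (∀ t, a ≤ t → t ≤ b → j ∉ S t) ∧ (∀ t, a ≤ t → t ≤ b - 1 → j ∉ R t)

def rc (n : ℕ) (R S : ℕ → Finset ℕ) (j b : ℕ) : Prop :=
  b = n ∨ j ∈ S (b + 1) ∨ j ∈ R b

def lcond (R S : ℕ → Finset ℕ) (i a : ℕ) : Prop :=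
  a = 1 ∨ i ∉ S (a - 1) ∨ i ∈ R (a - 1)

variable {n : ℕ} {R S : ℕ → Finset ℕ} {i j a b c m : ℕ}

lemma ipres_mono (h : ipres R S i a b) (ha : a ≤ c) : ipres R S i c b :=
  ⟨fun t h1 h2 => h.1 t (ha.trans h1) h2, fun t h1 h2 => h.2 t (ha.trans h1) h2⟩

lemma jab_mono (h : jab R S j a b) (ha : a ≤ c) : jab R S j c b :=
  ⟨fun t h1 h2 => h.1 t (ha.trans h1) h2, fun t h1 h2 => h.2 t (ha.trans h1) h2⟩

lemma ipres_self (h : i ∈ S b) (hb : 1 ≤ b) : ipres R S i b b := by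
  refine ⟨fun t h1 h2 => ?_, fun t h1 h2 => by omega⟩
  have : t = b := le_antisymm h2 h1
  subst this; exact h

lemma jab_self (h : j ∉ S b) (hb : 1 ≤ b) : jab R S j b b := by
  refine ⟨fun t h1 h2 => ?_, fun t h1 h2 => by omega⟩
  have : t = b := le_antisymm h2 h1
  subst this; exact h

lemma ipres_extend
    (hstep : ∀ i t, 1 ≤ t → t + 1 ≤ n → i ∈ S t → i ∉ R t → i ∈ S (t + 1))
    (h : ipres R S i a m) (ha : 1 ≤ a) (ham : a ≤ m) (hmn : m + 1 ≤ n)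
    (hR : i ∉ R m) : ipres R S i a (m + 1) := by
  constructor
  · intro t h1 h2
    rcases Nat.lt_or_ge t (m + 1) with ht | ht
    · exact h.1 t h1 (by omega)
    · have : t = m + 1 := by omega
      subst this
      exact hstep i m (by omega) hmn (h.1 m (by omega) le_rfl) hR
  · intro t h1 h2
    rcases Nat.lt_or_ge t m with ht | ht
    · exact h.2 t h1 (by omega)
    · have : t = m := by omega
      subst this; exact hR

lemma jab_extend (h : jab R S j a m) (ha : 1 ≤ a) (ham : a ≤ m)
    (hS1 : j ∉ S (m + 1)) (hR : j ∉ R m) : jab R S j a (m + 1) := by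
  constructor
  · intro t h1 h2
    rcases Nat.lt_or_ge t (m + 1) with ht | ht
    · exact h.1 t h1 (by omega)
    · have : t = m + 1 := by omega
      subst this; exact hS1
  · intro t h1 h2
    rcases Nat.lt_or_ge t m with ht | ht
    · exact h.2 t h1 (by omega)
    · have : t = m := by omega
      subst this; exact hR

lemma exists_hit
    (hstep : ∀ i t, 1 ≤ t → t + 1 ≤ n → i ∈ S t → i ∉ R t → i ∈ S (t + 1))
    (hc : 1 ≤ c) (hcb : c ≤ b) (hbn : b ≤ n)
    (hiS : i ∈ S c) (hni : ¬ ipres R S i c b) :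
    ∃ h, c ≤ h ∧ h ≤ b - 1 ∧ ipres R S i c h ∧ i ∈ R h := by
  have key : ∀ m, c ≤ m → m ≤ b →
      ipres R S i c m ∨ ∃ h, c ≤ h ∧ h ≤ m - 1 ∧ ipres R S i c h ∧ i ∈ R h := by
    intro m
    induction m with
    | zero => intro h1 h2; omega
    | succ m ih =>
      intro h1 h2
      rcases Nat.lt_or_ge m c with hm | hm
      · have : m + 1 = c := by omega
        left; rw [this]; exact ipres_self hiS hc
      · rcases ih hm (by omega) with hp | ⟨h, hh1, hh2, hh3, hh4⟩
        · by_cases hR : i ∈ R m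
          · right; exact ⟨m, hm, by omega, hp, hR⟩
          · left; exact ipres_extend hstep hp hc hm (by omega) hR
        · right; exact ⟨h, hh1, by omega, hh3, hh4⟩
  rcases key b (by omega) le_rfl with hp | hgood
  · exact absurd hp hni
  · exact hgood

lemma exists_end (ha : 1 ≤ a) (han : a ≤ n) (hj : j ∉ S a) :
    ∃ e, a ≤ e ∧ e ≤ n ∧ jab R S j a e ∧ rc n R S j e := by
  have key : ∀ k m, a ≤ m → m ≤ n → n - m = k → jab R S j a m →
      ∃ e, a ≤ e ∧ e ≤ n ∧ jab R S j a e ∧ rc n R S j e := by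
    intro k
    induction k with
    | zero =>
      intro m h1 h2 h3 h4
      exact ⟨m, h1, h2, h4, Or.inl (by omega)⟩
    | succ k ih =>
      intro m h1 h2 h3 h4
      by_cases hrc : rc n R S j m
      · exact ⟨m, h1, h2, h4, hrc⟩
      · rw [rc] at hrc
        push_neg at hrc
        exact ih (m + 1) (by omega) (by omega) (by omega)
          (jab_extend h4 ha h1 hrc.2.1 hrc.2.2)
  exact key (n - a) a le_rfl han rfl (jab_self hj ha)

noncomputable def segEnd (n : ℕ) (R S : ℕ → Finset ℕ) (j a : ℕ) : ℕ :=
  sInf {e | a ≤ e ∧ e ≤ n ∧ jab R S j a e ∧ rc n R S j e}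

noncomputable def segStart (R S : ℕ → Finset ℕ) (j b : ℕ) : ℕ :=
  sInf {c | 1 ≤ c ∧ jab R S j c b}

noncomputable def runStart (R S : ℕ → Finset ℕ) (i b : ℕ) : ℕ :=
  sInf {a | 1 ≤ a ∧ ipres R S i a b}

noncomputable def hit (R S : ℕ → Finset ℕ) (i c : ℕ) : ℕ :=
  sInf {h | c ≤ h ∧ ipres R S i c h ∧ i ∈ R h}

lemma segEnd_eq (hrc : rc n R S j b) (hab : a ≤ b) (hbn : b ≤ n)
    (hjab : jab R S j a b) : segEnd n R S j a = b := by
  rw [segEnd]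
  have hbmem : b ∈ {e | a ≤ e ∧ e ≤ n ∧ jab R S j a e ∧ rc n R S j e} :=
    ⟨hab, hbn, hjab, hrc⟩
  have hle : sInf {e | a ≤ e ∧ e ≤ n ∧ jab R S j a e ∧ rc n R S j e} ≤ b :=
    Nat.sInf_le hbmem
  have hmem := Nat.sInf_mem (⟨b, hbmem⟩ :
    Set.Nonempty {e | a ≤ e ∧ e ≤ n ∧ jab R S j a e ∧ rc n R S j e})
  set e := sInf {e | a ≤ e ∧ e ≤ n ∧ jab R S j a e ∧ rc n R S j e} with he
  obtain ⟨h1, h2, h3, h4⟩ := hmem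
  rcases Nat.lt_or_ge e b with hlt | hge
  · exfalso
    rcases h4 with h4 | h4 | h4
    · omega
    · exact hjab.1 (e + 1) (by omega) (by omega) h4
    · exact hjab.2 e h1 (by omega) h4
  · omega

lemma segEnd_spec (ha : 1 ≤ a) (han : a ≤ n) (hj : j ∉ S a) :
    a ≤ segEnd n R S j a ∧ segEnd n R S j a ≤ n ∧
      jab R S j a (segEnd n R S j a) ∧ rc n R S j (segEnd n R S j a) ∧
      j ∉ S (segEnd n R S j a) := by
  rw [segEnd]
  have hne : Set.Nonempty {e | a ≤ e ∧ e ≤ n ∧ jab R S j a e ∧ rc n R S j e} := by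
    obtain ⟨e, h1, h2, h3, h4⟩ := exists_end ha han hj
    exact ⟨e, h1, h2, h3, h4⟩
  obtain ⟨h1, h2, h3, h4⟩ := Nat.sInf_mem hne
  exact ⟨h1, h2, h3, h4, h3.1 _ h1 le_rfl⟩

lemma segStart_spec (hb : 1 ≤ b) (hjb : j ∉ S b) :
    1 ≤ segStart R S j b ∧ jab R S j (segStart R S j b) b ∧ segStart R S j b ≤ b := by
  rw [segStart]
  have hbmem : b ∈ {c | 1 ≤ c ∧ jab R S j c b} := ⟨hb, jab_self hjb hb⟩
  obtain ⟨h1, h2⟩ := Nat.sInf_mem (⟨b, hbmem⟩ : Set.Nonempty {c | 1 ≤ c ∧ jab R S j c b})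
  exact ⟨h1, h2, Nat.sInf_le hbmem⟩

lemma segStart_le (ha : 1 ≤ a) (hj : jab R S j a b) : segStart R S j b ≤ a :=
  Nat.sInf_le ⟨ha, hj⟩

lemma segStart_boundary
    (hexit : ∀ j t, 1 ≤ t → t + 1 ≤ n → j ∈ S t → j ∉ S (t + 1) → j ∈ R t)
    (hb : 1 ≤ b) (hbn : b ≤ n) (hjb : j ∉ S b) (h2 : 2 ≤ segStart R S j b) :
    j ∈ R (segStart R S j b - 1) := by
  obtain ⟨hc1, hcjab, hcb⟩ := segStart_spec (R := R) hb hjb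
  set c := segStart R S j b with hc
  have hnot : (c - 1) ∉ {c | 1 ≤ c ∧ jab R S j c b} := by
    apply Nat.notMem_of_lt_sInf
    rw [segStart] at hc
    omega
  have hnot2 : ¬ jab R S j (c - 1) b := fun h => hnot ⟨by omega, h⟩
  rw [jab, not_and_or] at hnot2
  push_neg at hnot2
  rcases hnot2 with ⟨t, ht1, ht2, ht3⟩ | ⟨t, ht1, ht2, ht3⟩
  · -- j ∈ S t for some t ∈ [c-1, b]
    have htc : t = c - 1 := by
      by_contra hne
      exact hcjab.1 t (by omega) ht2 ht3
    subst htc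
    have hjc : j ∉ S (c - 1 + 1) := by
      have := hcjab.1 c (le_refl c) hcb
      have hcc : c - 1 + 1 = c := by omega
      rw [hcc]; exact this
    exact hexit j (c - 1) (by omega) (by omega) ht3 hjc
  · have htc : t = c - 1 := by
      by_contra hne
      exact hcjab.2 t (by omega) ht2 ht3
    subst htc
    exact ht3

lemma runStart_spec (hi : i ∈ S b) (hb : 1 ≤ b) :
    1 ≤ runStart R S i b ∧ ipres R S i (runStart R S i b) b ∧ runStart R S i b ≤ b := by
  rw [runStart]
  have hbmem : b ∈ {a | 1 ≤ a ∧ ipres R S i a b} := ⟨hb, ipres_self hi hb⟩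
  obtain ⟨h1, h2⟩ := Nat.sInf_mem (⟨b, hbmem⟩ : Set.Nonempty {a | 1 ≤ a ∧ ipres R S i a b})
  exact ⟨h1, h2, Nat.sInf_le hbmem⟩

lemma runStart_le (ha : 1 ≤ a) (hp : ipres R S i a b) : runStart R S i b ≤ a :=
  Nat.sInf_le ⟨ha, hp⟩

lemma runStart_lcond (hi : i ∈ S b) (hb : 1 ≤ b) : lcond R S i (runStart R S i b) := by
  obtain ⟨h1, h2, h3⟩ := runStart_spec (R := R) hi hb
  set r := runStart R S i b with hr
  by_cases hr1 : r = 1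
  · exact Or.inl hr1
  · have hnot : (r - 1) ∉ {a | 1 ≤ a ∧ ipres R S i a b} := by
      apply Nat.notMem_of_lt_sInf
      rw [runStart] at hr
      omega
    have hnot2 : ¬ ipres R S i (r - 1) b := fun h => hnot ⟨by omega, h⟩
    rw [ipres, not_and_or] at hnot2
    push_neg at hnot2
    rcases hnot2 with ⟨t, ht1, ht2, ht3⟩ | ⟨t, ht1, ht2, ht3⟩
    · have htc : t = r - 1 := by
        by_contra hne
        exact ht3 (h2.1 t (by omega) ht2)
      subst htc
      exact Or.inr (Or.inl ht3)
    · have htc : t = r - 1 := by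
        by_contra hne
        exact h2.2 t (by omega) ht2 ht3
      subst htc
      exact Or.inr (Or.inr ht3)

lemma runStart_eq (ha : 1 ≤ a) (hab : a ≤ b) (hp : ipres R S i a b)
    (hl : lcond R S i a) : runStart R S i b = a := by
  have hle : runStart R S i b ≤ a := runStart_le ha hp
  have hi : i ∈ S b := hp.1 b hab le_rfl
  obtain ⟨h1, h2, h3⟩ := runStart_spec (R := R) hi (by omega)
  rcases Nat.lt_or_ge (runStart R S i b) a with hlt | hge
  · exfalso
    have hSa : i ∈ S (a - 1) := h2.1 (a - 1) (by omega) (by omega)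
    have hRa : i ∉ R (a - 1) := h2.2 (a - 1) (by omega) (by omega)
    rcases hl with hl | hl | hl
    · omega
    · exact hl hSa
    · exact hRa hl
  · omega

lemma hit_le (h : c ≤ m ∧ ipres R S i c m ∧ i ∈ R m) : hit R S i c ≤ m :=
  Nat.sInf_le h

lemma hit_spec
    (hstep : ∀ i t, 1 ≤ t → t + 1 ≤ n → i ∈ S t → i ∉ R t → i ∈ S (t + 1))
    (hc : 1 ≤ c) (hcb : c ≤ b) (hbn : b ≤ n)
    (hiS : i ∈ S c) (hni : ¬ ipres R S i c b) :
    c ≤ hit R S i c ∧ hit R S i c ≤ b - 1 ∧ ipres R S i c (hit R S i c) ∧ i ∈ R (hit R S i c) := by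
  obtain ⟨h, hh1, hh2, hh3, hh4⟩ := exists_hit hstep hc hcb hbn hiS hni
  have hne : Set.Nonempty {h | c ≤ h ∧ ipres R S i c h ∧ i ∈ R h} := ⟨h, hh1, hh3, hh4⟩
  have hle : hit R S i c ≤ h := Nat.sInf_le ⟨hh1, hh3, hh4⟩
  obtain ⟨g1, g2, g3⟩ := Nat.sInf_mem hne
  exact ⟨g1, by omega, g2, g3⟩


open scoped Classical in
noncomputable def mutF (n : ℕ) (R S : ℕ → Finset ℕ) : Finset (ℕ × ℕ × ℕ × ℕ) :=
  ((Icc 1 (n+1)) ×ˢ (Icc 1 (n+1)) ×ˢ (Icc 1 n) ×ˢ (Icc 1 n)).filter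
    (fun q => q.1 ≠ q.2.1 ∧ q.2.2.1 ≤ q.2.2.2 ∧ ipres R S q.1 q.2.2.1 q.2.2.2 ∧
      lcond R S q.1 q.2.2.1 ∧ jab R S q.2.1 q.2.2.1 q.2.2.2 ∧ rc n R S q.2.1 q.2.2.2)

open scoped Classical in
noncomputable def baseF (n : ℕ) (S : ℕ → Finset ℕ) : Finset (ℕ × ℕ) :=
  ((Icc 1 (n+1)) ×ˢ (Icc 1 n)).filter (fun p => p.1 ∉ S p.2)

open scoped Classical in
noncomputable def singF (n : ℕ) (R S : ℕ → Finset ℕ) : Finset (ℕ × ℕ × ℕ) :=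
  ((Icc 1 (n+1)) ×ˢ (Icc 1 (n+1)) ×ˢ (Icc 2 n)).filter
    (fun p => ∃ h, p.2.2 = h + 1 ∧ SingCond n R S p.1 p.2.1 h)

lemma mut_coe : Mut n R S = ↑(mutF n R S) := by
  ext q
  rcases q with ⟨i, j, a, b⟩
  simp only [Mut, Set.mem_setOf_eq, IsMut, mutF, mem_coe, mem_filter, mem_product, mem_Icc]
  constructor
  · rintro ⟨hi, hj, hne, ha1, hab, hbn, hiS, hiR, hlc, hjS, hjR, hrc⟩
    exact ⟨⟨hi, hj, ⟨by omega, by omega⟩, ⟨by omega, by omega⟩⟩,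
      hne, hab, ⟨hiS, hiR⟩, hlc, ⟨hjS, hjR⟩, hrc⟩
  · rintro ⟨⟨hi, hj, ⟨ha1, han⟩, ⟨hb1, hbn⟩⟩, hne, hab, ⟨hiS, hiR⟩, hlc, ⟨hjS, hjR⟩, hrc⟩
    exact ⟨hi, hj, hne, ha1, hab, hbn, hiS, hiR, hlc, hjS, hjR, hrc⟩

lemma sing_coe (hn : 1 ≤ n)
    (hR1 : ∀ t, 1 ≤ t → t ≤ n - 1 → R t ⊆ Icc 1 (n + 1)) :
    Sing n R S = ↑(singF n R S) := by
  ext p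
  rcases p with ⟨i, j, m⟩
  simp only [Sing, Set.mem_setOf_eq, singF, mem_coe, mem_filter, mem_product]
  constructor
  · rintro ⟨hi, h, rfl, hsc⟩
    refine ⟨⟨hi, ?_, ?_⟩, h, rfl, hsc⟩
    · obtain ⟨hh, hiR, hjS, k, hk1, hk2, hk3, _⟩ := hsc
      rw [mem_Icc] at hk2
      exact hR1 k hk2.1 hk2.2 hk3
    · obtain ⟨hh, _⟩ := hsc
      rw [mem_Icc] at hh ⊢
      omega
  · rintro ⟨⟨hi, hj, hm⟩, hex⟩
    exact ⟨hi, hex⟩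

lemma fiber_count
    (hn : 1 ≤ n)
    (hS1 : ∀ t, 1 ≤ t → t ≤ n → S t ⊆ Icc 1 (n+1))
    (hS2 : ∀ t, 1 ≤ t → t ≤ n → (S t).card = t)
    (hstep : ∀ i t, 1 ≤ t → t + 1 ≤ n → i ∈ S t → i ∉ R t → i ∈ S (t + 1))
    (hexit : ∀ j t, 1 ≤ t → t + 1 ≤ n → j ∈ S t → j ∉ S (t + 1) → j ∈ R t)
    (hj : j ∈ Icc 1 (n+1)) (hb : b ∈ Icc 1 n) :
    ((mutF n R S).filter (fun q => (q.2.1, q.2.2.2) = (j, b))).card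
      = ((baseF n S).filter (fun p => (p.1, segEnd n R S p.1 p.2) = (j, b))).card
        + ((singF n R S).filter (fun p => (p.2.1, segEnd n R S p.2.1 p.2.2) = (j, b))).card := by
  classical
  rw [mem_Icc] at hj hb
  by_cases hend : j ∉ S b ∧ rc n R S j b
  · obtain ⟨hjSb, hrc⟩ := hend
    obtain ⟨hc1, hcjab, hcb⟩ := segStart_spec (R := R) (by omega : 1 ≤ b) hjSb
    generalize hcdef : segStart R S j b = c at hc1 hcjab hcb
    set C : Finset ℕ := (S b).filter (fun i => 2 ≤ c ∧ ipres R S i (c - 1) b) with hCdef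
    have hCsub : C ⊆ S b := filter_subset _ _
    have hSbcard : (S b).card = b := hS2 b (by omega) (by omega)
    -- STEP M : the mutation fiber counts S b \ C
    have hM : ((mutF n R S).filter (fun q => (q.2.1, q.2.2.2) = (j, b))).card
        = (S b \ C).card := by
      apply card_bij (fun q _ => q.1)
      · rintro ⟨i1, j1, a1, b1⟩ hq
        rw [mem_filter, Prod.mk.injEq] at hq
        obtain ⟨hq1, rfl, rfl⟩ := hq
        simp only [mutF, mem_filter, mem_product, mem_Icc] at hq1
        obtain ⟨⟨hi1, hj1, ha1, hb1⟩, hne, hab, hip, hlc, hjab, hrcq⟩ := hq1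
        rw [mem_sdiff]
        refine ⟨hip.1 _ hab le_rfl, ?_⟩
        intro hiC
        rw [hCdef, mem_filter] at hiC
        obtain ⟨_, h2c, hipC⟩ := hiC
        have hr1 : runStart R S i1 b1 = a1 := runStart_eq ha1.1 hab hip hlc
        have hr2 : runStart R S i1 b1 ≤ c - 1 := runStart_le (by omega) hipC
        have hca : segStart R S j1 b1 ≤ a1 := segStart_le ha1.1 hjab
        rw [hcdef] at hca
        omega
      · rintro ⟨i1, j1, a1, b1⟩ hq ⟨i2, j2, a2, b2⟩ hq' heq
        rw [mem_filter, Prod.mk.injEq] at hq hq'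
        obtain ⟨hq1, hq2, hq3⟩ := hq
        obtain ⟨hq1', hq2', hq3'⟩ := hq'
        have heqi : i1 = i2 := heq
        subst heqi
        simp only [mutF, mem_filter, mem_product, mem_Icc] at hq1 hq1'
        obtain ⟨⟨hi1, hj1, ha1, hb1⟩, hne, hab, hip, hlc, hjab, hrcq⟩ := hq1
        obtain ⟨⟨hi1', hj1', ha1', hb1'⟩, hne', hab', hip', hlc', hjab', hrcq'⟩ := hq1'
        have e1 : runStart R S i1 b1 = a1 := runStart_eq ha1.1 hab hip hlc
        have e2 : runStart R S i1 b2 = a2 := runStart_eq ha1'.1 hab' hip' hlc'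
        have hbb : b1 = b2 := by
          have h3 : b1 = b := hq3
          have h3' : b2 = b := hq3'
          omega
        rw [← hbb] at e2
        have hjj : j1 = j2 := by
          have h2 : j1 = j := hq2
          have h2' : j2 = j := hq2'
          omega
        simp only [Prod.mk.injEq]
        refine ⟨trivial, hjj, by omega, hbb⟩
      · intro i1 hi1
        rw [mem_sdiff] at hi1
        obtain ⟨hi1S, hi1C⟩ := hi1
        obtain ⟨hr1, hrip, hrb⟩ := runStart_spec (R := R) hi1S (by omega : 1 ≤ b)
        have hrl := runStart_lcond (R := R) hi1S (by omega : 1 ≤ b)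
        have hcr : c ≤ runStart R S i1 b := by
          by_contra hlt
          push_neg at hlt
          have h2c : 2 ≤ c := by omega
          have : ipres R S i1 (c - 1) b := ipres_mono hrip (by omega)
          exact hi1C (by rw [hCdef, mem_filter]; exact ⟨hi1S, h2c, this⟩)
        refine ⟨(i1, j, runStart R S i1 b, b), ?_, rfl⟩
        rw [mem_filter, Prod.mk.injEq]
        refine ⟨?_, rfl, rfl⟩
        simp only [mutF, mem_filter, mem_product, mem_Icc]
        refine ⟨⟨?_, ⟨hj.1, hj.2⟩, ⟨by omega, by omega⟩, ⟨by omega, by omega⟩⟩,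
          ?_, hrb, hrip, hrl, jab_mono hcjab hcr, hrc⟩
        · have := hS1 b (by omega) (by omega) hi1S
          rw [mem_Icc] at this
          exact ⟨this.1, this.2⟩
        · intro heq
          rw [heq] at hi1S
          exact hjSb hi1S
    -- STEP B : the base fiber is Icc c b (paired with j)
    have hB : ((baseF n S).filter (fun p => (p.1, segEnd n R S p.1 p.2) = (j, b))).card
        = b + 1 - c := by
      have hset : (baseF n S).filter (fun p => (p.1, segEnd n R S p.1 p.2) = (j, b))
          = {j} ×ˢ Icc c b := by
        ext ⟨j1, a1⟩
        rw [mem_filter, Prod.mk.injEq, mem_product, mem_singleton, mem_Icc]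
        simp only [baseF, mem_filter, mem_product, mem_Icc]
        constructor
        · rintro ⟨⟨⟨hj1, ha1⟩, hnS⟩, rfl, hq3⟩
          obtain ⟨g1, g2, g3, g4, g5⟩ := segEnd_spec (n := n) (R := R) ha1.1 ha1.2 hnS
          rw [hq3] at g1 g3
          have : segStart R S j1 b ≤ a1 := segStart_le ha1.1 g3
          rw [hcdef] at this
          exact ⟨rfl, this, g1⟩
        · rintro ⟨rfl, hca, hab⟩
          have hjab : jab R S j1 a1 b := jab_mono hcjab hca
          have hnS : j1 ∉ S a1 := hjab.1 a1 le_rfl hab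
          refine ⟨⟨⟨⟨hj.1, hj.2⟩, ⟨by omega, by omega⟩⟩, hnS⟩, rfl, ?_⟩
          exact segEnd_eq hrc hab (by omega) hjab
      rw [hset, card_product, card_singleton, Nat.card_Icc]
      omega
    have hsd : (S b \ C).card = b - C.card := by rw [card_sdiff_of_subset hCsub, hSbcard]
    have hCle : C.card ≤ (S b).card := card_le_card hCsub
    by_cases h2c : 2 ≤ c
    · -- the singular subcase : c ≥ 2
      have h2c' : 2 ≤ segStart R S j b := by rw [hcdef]; exact h2c
      have hbd := segStart_boundary hexit (by omega : 1 ≤ b) (by omega : b ≤ n) hjSb h2c'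
      rw [hcdef] at hbd
      set E := (S (c - 1)).filter (fun i => ¬ ipres R S i (c - 1) b) with hEdef
      have hCalt : (S (c - 1)).filter (fun i => ipres R S i (c - 1) b) = C := by
        ext i1
        rw [mem_filter, hCdef, mem_filter]
        constructor
        · rintro ⟨hi1, hip⟩
          exact ⟨hip.1 b (by omega) le_rfl, h2c, hip⟩
        · rintro ⟨hi1, _, hip⟩
          exact ⟨hip.1 (c - 1) le_rfl (by omega), hip⟩
      have hScm : (S (c - 1)).card = c - 1 := hS2 (c - 1) (by omega) (by omega)
      have hCE : C.card + E.card = c - 1 := by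
        rw [← hScm, ← hCalt, hEdef]
        exact card_filter_add_card_filter_not _
      have hKey : ∀ p ∈ (singF n R S).filter
          (fun p => (p.2.1, segEnd n R S p.2.1 p.2.2) = (j, b)),
          p.1 ∈ E ∧ (p.1, j, hit R S p.1 (c - 1) + 1) = p := by
        rintro ⟨i1, j1, m1⟩ hp
        rw [mem_filter, Prod.mk.injEq] at hp
        obtain ⟨hp1, hp2, hp3⟩ := hp
        have hp2' : j1 = j := hp2
        have hp3' : segEnd n R S j1 m1 = b := hp3
        rw [hp2'] at hp3'
        simp only [singF, mem_filter, mem_product, mem_Icc] at hp1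
        obtain ⟨⟨hi1, hj1, hm1⟩, h, hm, hsc⟩ := hp1
        obtain ⟨hh, hiR, hjS, k, hk1, hk2, hk3, hkS, hkR⟩ := hsc
        rw [mem_Icc] at hh hk2
        rw [hp2'] at hjS hk3
        have hjSm : j ∉ S m1 := by rw [hm]; exact hjS
        obtain ⟨g1, g2, g3, g4, g5⟩ :=
          segEnd_spec (n := n) (R := R) (show 1 ≤ m1 by omega) hm1.2 hjSm
        rw [hp3'] at g1 g3
        have hcm : segStart R S j b ≤ m1 := segStart_le (by omega) g3
        rw [hcdef] at hcm
        have hkc : k < c := by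
          by_contra hge
          push_neg at hge
          exact absurd hk3 (hcjab.2 k hge (by omega))
        have hiSc : i1 ∈ S (c - 1) := hkS (c - 1) (by omega) (by omega)
        have hipch : ipres R S i1 (c - 1) h :=
          ⟨fun t ht1 ht2 => hkS t (by omega) ht2, fun t ht1 ht2 => hkR t (by omega) ht2⟩
        have hnip : ¬ ipres R S i1 (c - 1) b := fun hip => hip.2 h (by omega) (by omega) hiR
        have hEmem : i1 ∈ E := by rw [hEdef, mem_filter]; exact ⟨hiSc, hnip⟩
        refine ⟨hEmem, ?_⟩
        have hhle : hit R S i1 (c - 1) ≤ h := hit_le ⟨by omega, hipch, hiR⟩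
        obtain ⟨w1, w2, w3, w4⟩ :=
          hit_spec hstep (show 1 ≤ c - 1 by omega) (by omega) (by omega) hiSc hnip
        have hhit : hit R S i1 (c - 1) = h := by
          by_contra hne2
          exact hkR (hit R S i1 (c - 1)) (by omega) (by omega) w4
        simp only [Prod.mk.injEq]
        exact ⟨trivial, hp2'.symm, by omega⟩
      have hG : ((singF n R S).filter
          (fun p => (p.2.1, segEnd n R S p.2.1 p.2.2) = (j, b))).card = E.card := by
        apply card_bij (fun p _ => p.1)
        · intro p hp
          exact (hKey p hp).1
        · intro p hp p' hp' heq
          have e := (hKey p hp).2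
          have e' := (hKey p' hp').2
          rw [← e, ← e', heq]
        · intro i1 hiE
          rw [hEdef, mem_filter] at hiE
          obtain ⟨hiSc, hnip⟩ := hiE
          obtain ⟨w1, w2, w3, w4⟩ :=
            hit_spec hstep (show 1 ≤ c - 1 by omega) (by omega) (by omega) hiSc hnip
          refine ⟨(i1, j, hit R S i1 (c - 1) + 1), ?_, rfl⟩
          rw [mem_filter, Prod.mk.injEq]
          refine ⟨?_, rfl, ?_⟩
          · simp only [singF, mem_filter, mem_product, mem_Icc]
            refine ⟨⟨?_, ⟨hj.1, hj.2⟩, ⟨by omega, by omega⟩⟩,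
              hit R S i1 (c - 1), rfl, ?_⟩
            · have := hS1 (c - 1) (by omega) (by omega) hiSc
              rw [mem_Icc] at this
              exact ⟨this.1, this.2⟩
            · refine ⟨by rw [mem_Icc]; omega, w4, ?_,
                c - 1, w1, by rw [mem_Icc]; omega, hbd, w3.1, w3.2⟩
              exact hcjab.1 (hit R S i1 (c - 1) + 1) (by omega) (by omega)
          · show segEnd n R S j (hit R S i1 (c - 1) + 1) = b
            exact segEnd_eq hrc (by omega) (by omega) (jab_mono hcjab (by omega))
      rw [hM, hsd, hB, hG]
      omega
    · -- the plain subcase : c = 1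
      have hCempty : C = ∅ := by
        rw [hCdef]
        apply filter_false_of_mem
        intro x _ hx
        omega
      have hGempty : (singF n R S).filter
          (fun p => (p.2.1, segEnd n R S p.2.1 p.2.2) = (j, b)) = ∅ := by
        rw [eq_empty_iff_forall_notMem]
        rintro ⟨i1, j1, m1⟩ hp
        rw [mem_filter, Prod.mk.injEq] at hp
        obtain ⟨hp1, hp2, hp3⟩ := hp
        have hp2' : j1 = j := hp2
        have hp3' : segEnd n R S j1 m1 = b := hp3
        rw [hp2'] at hp3'
        simp only [singF, mem_filter, mem_product, mem_Icc] at hp1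
        obtain ⟨⟨hi1, hj1, hm1⟩, h, hm, hsc⟩ := hp1
        obtain ⟨hh, hiR, hjS, k, hk1, hk2, hk3, hkS, hkR⟩ := hsc
        rw [mem_Icc] at hh hk2
        rw [hp2'] at hjS hk3
        have hjSm : j ∉ S m1 := by rw [hm]; exact hjS
        obtain ⟨g1, g2, g3, g4, g5⟩ :=
          segEnd_spec (n := n) (R := R) (show 1 ≤ m1 by omega) hm1.2 hjSm
        rw [hp3'] at g1 g3
        have hcm : segStart R S j b ≤ m1 := segStart_le (by omega) g3
        rw [hcdef] at hcm
        have hkc : k < c := by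
          by_contra hge
          push_neg at hge
          exact absurd hk3 (hcjab.2 k hge (by omega))
        omega
      rw [hM, hsd, hB, hGempty, hCempty]
      simp
      omega
  · -- degenerate case: all three fibers are empty
    have hM : (mutF n R S).filter (fun q => (q.2.1, q.2.2.2) = (j, b)) = ∅ := by
      rw [eq_empty_iff_forall_notMem]
      rintro ⟨i1, j1, a1, b1⟩ hq
      rw [mem_filter, Prod.mk.injEq] at hq
      obtain ⟨hq1, hq2, hq3⟩ := hq
      subst hq2; subst hq3
      simp only [mutF, mem_filter, mem_product, mem_Icc] at hq1
      obtain ⟨hbnds, hne, hab, hip, hlc, hjab, hrc⟩ := hq1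
      exact hend ⟨hjab.1 b1 hab le_rfl, hrc⟩
    have hB : (baseF n S).filter (fun p => (p.1, segEnd n R S p.1 p.2) = (j, b)) = ∅ := by
      rw [eq_empty_iff_forall_notMem]
      rintro ⟨j1, a1⟩ hq
      rw [mem_filter, Prod.mk.injEq] at hq
      obtain ⟨hq1, hq2, hq3⟩ := hq
      subst hq2
      simp only [baseF, mem_filter, mem_product, mem_Icc] at hq1
      obtain ⟨⟨hj1, ha1⟩, hnot⟩ := hq1
      obtain ⟨g1, g2, g3, g4, g5⟩ := segEnd_spec (n := n) (R := R) ha1.1 ha1.2 hnot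
      rw [hq3] at g4 g5
      exact hend ⟨g5, g4⟩
    have hG : (singF n R S).filter (fun p => (p.2.1, segEnd n R S p.2.1 p.2.2) = (j, b)) = ∅ := by
      rw [eq_empty_iff_forall_notMem]
      rintro ⟨i1, j1, m1⟩ hq
      rw [mem_filter, Prod.mk.injEq] at hq
      obtain ⟨hq1, hq2, hq3⟩ := hq
      subst hq2
      simp only [singF, mem_filter, mem_product, mem_Icc] at hq1
      obtain ⟨⟨hi1, hj1, hm1⟩, h, hm, hsc⟩ := hq1
      have hjS : j1 ∉ S m1 := by rw [hm]; exact hsc.2.2.1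
      obtain ⟨g1, g2, g3, g4, g5⟩ := segEnd_spec (n := n) (R := R) (by omega) hm1.2 hjS
      rw [hq3] at g4 g5
      exact hend ⟨g5, g4⟩
    rw [hM, hB, hG]
    simp

lemma count_eq
    (hn : 1 ≤ n)
    (hS1 : ∀ t, 1 ≤ t → t ≤ n → S t ⊆ Icc 1 (n+1))
    (hS2 : ∀ t, 1 ≤ t → t ≤ n → (S t).card = t)
    (hstep : ∀ i t, 1 ≤ t → t + 1 ≤ n → i ∈ S t → i ∉ R t → i ∈ S (t + 1))
    (hexit : ∀ j t, 1 ≤ t → t + 1 ≤ n → j ∈ S t → j ∉ S (t + 1) → j ∈ R t) :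
    (mutF n R S).card = (baseF n S).card + (singF n R S).card := by
  classical
  have hmut : (mutF n R S).card = ∑ jb ∈ (Icc 1 (n+1)) ×ˢ (Icc 1 n),
      ((mutF n R S).filter (fun q => (q.2.1, q.2.2.2) = jb)).card := by
    apply card_eq_sum_card_fiberwise
    rintro ⟨i1, j1, a1, b1⟩ hq
    simp only [mutF, mem_coe, mem_filter, mem_product, mem_Icc] at hq
    obtain ⟨⟨hi1, hj1, ha1, hb1⟩, -⟩ := hq
    show (j1, b1) ∈ _
    rw [mem_coe, mem_product, mem_Icc, mem_Icc]
    exact ⟨hj1, hb1⟩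
  have hbase : (baseF n S).card = ∑ jb ∈ (Icc 1 (n+1)) ×ˢ (Icc 1 n),
      ((baseF n S).filter (fun p => (p.1, segEnd n R S p.1 p.2) = jb)).card := by
    apply card_eq_sum_card_fiberwise
    rintro ⟨j1, a1⟩ hp
    simp only [baseF, mem_coe, mem_filter, mem_product, mem_Icc] at hp
    obtain ⟨⟨hj1, ha1⟩, hnS⟩ := hp
    obtain ⟨g1, g2, g3, g4, g5⟩ := segEnd_spec (n := n) (R := R) ha1.1 ha1.2 hnS
    show (j1, segEnd n R S j1 a1) ∈ _
    rw [mem_coe, mem_product, mem_Icc, mem_Icc]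
    exact ⟨⟨hj1.1, hj1.2⟩, by omega, g2⟩
  have hsing : (singF n R S).card = ∑ jb ∈ (Icc 1 (n+1)) ×ˢ (Icc 1 n),
      ((singF n R S).filter (fun p => (p.2.1, segEnd n R S p.2.1 p.2.2) = jb)).card := by
    apply card_eq_sum_card_fiberwise
    rintro ⟨i1, j1, m1⟩ hp
    simp only [singF, mem_coe, mem_filter, mem_product, mem_Icc] at hp
    obtain ⟨⟨hi1, hj1, hm1⟩, h, hm, hsc⟩ := hp
    have hnS : j1 ∉ S m1 := by rw [hm]; exact hsc.2.2.1
    obtain ⟨g1, g2, g3, g4, g5⟩ :=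
      segEnd_spec (n := n) (R := R) (show 1 ≤ m1 by omega) hm1.2 hnS
    show (j1, segEnd n R S j1 m1) ∈ _
    rw [mem_coe, mem_product, mem_Icc, mem_Icc]
    exact ⟨⟨hj1.1, hj1.2⟩, by omega, g2⟩
  rw [hmut, hbase, hsing, ← sum_add_distrib]
  apply sum_congr rfl
  rintro ⟨j1, b1⟩ hjb
  rw [mem_product] at hjb
  exact fiber_count hn hS1 hS2 hstep hexit hjb.1 hjb.2

lemma baseF_card
    (hn : 1 ≤ n)
    (hS1 : ∀ t, 1 ≤ t → t ≤ n → S t ⊆ Icc 1 (n+1))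
    (hS2 : ∀ t, 1 ≤ t → t ≤ n → (S t).card = t) :
    (baseF n S).card = n * (n + 1) / 2 := by
  classical
  have h1 : (baseF n S).card = ∑ a ∈ Icc 1 n, ((baseF n S).filter (fun p => p.2 = a)).card := by
    apply card_eq_sum_card_fiberwise
    rintro ⟨j1, a1⟩ hp
    simp only [baseF, mem_coe, mem_filter, mem_product] at hp
    exact hp.1.2
  have h2 : ∀ a ∈ Icc 1 n, ((baseF n S).filter (fun p => p.2 = a)).card = n + 1 - a := by
    intro a ha
    rw [mem_Icc] at ha
    have hset : (baseF n S).filter (fun p => p.2 = a) = (Icc 1 (n+1) \ S a) ×ˢ {a} := by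
      ext ⟨j1, a1⟩
      rw [mem_filter, mem_product, mem_sdiff, mem_singleton]
      simp only [baseF, mem_filter, mem_product]
      constructor
      · rintro ⟨⟨⟨hj1, ha1⟩, hnS⟩, heq⟩
        have heq' : a1 = a := heq
        subst heq'
        exact ⟨⟨hj1, hnS⟩, rfl⟩
      · rintro ⟨⟨hj1, hnS⟩, heq⟩
        have heq' : a1 = a := heq
        subst heq'
        exact ⟨⟨⟨hj1, by rw [mem_Icc]; omega⟩, hnS⟩, rfl⟩
    rw [hset, card_product, card_singleton, mul_one,
      card_sdiff_of_subset (hS1 a ha.1 ha.2), Nat.card_Icc, hS2 a ha.1 ha.2]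
    omega
  rw [h1, sum_congr rfl h2]
  have h3 : ∑ a ∈ Icc 1 n, (n + 1 - a) = ∑ a ∈ Icc 1 n, a := by
    refine sum_nbij' (fun a => n + 1 - a) (fun a => n + 1 - a) ?_ ?_ ?_ ?_ ?_
    · intro a ha; rw [mem_Icc] at ha; show n + 1 - a ∈ Icc 1 n; rw [mem_Icc]; omega
    · intro a ha; rw [mem_Icc] at ha; show n + 1 - a ∈ Icc 1 n; rw [mem_Icc]; omega
    · intro a ha; rw [mem_Icc] at ha; show n + 1 - (n + 1 - a) = a; omega
    · intro a ha; rw [mem_Icc] at ha; show n + 1 - (n + 1 - a) = a; omega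
    · intro a ha; rfl
  have h4 : (∑ a ∈ Icc 1 n, a) * 2 = n * (n + 1) := by
    have hgauss := Finset.sum_range_id_mul_two (n + 1)
    have hr : range (n + 1) = insert 0 (Icc 1 n) := by
      ext x
      rw [mem_range, mem_insert, mem_Icc]
      omega
    rw [hr, sum_insert (by rw [mem_Icc]; omega)] at hgauss
    simp only [Nat.add_sub_cancel, zero_add] at hgauss
    rw [hgauss, Nat.mul_comm]
  rw [h3]
  generalize hM : n * (n + 1) = M at h4 ⊢
  omega

end AdmMut

/-- `|Mut(S)| = n(n+1)/2 + |Sing(S)|`. -/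
theorem mut_card_eq (n : ℕ) (hn : 1 ≤ n) (R S : ℕ → Finset ℕ)
    (hadm : RAdmissible n R S) :
    (Mut n R S).ncard = n * (n + 1) / 2 + (Sing n R S).ncard := by
  obtain ⟨hR1, hS12, hsub⟩ := hadm
  have hS1 : ∀ t, 1 ≤ t → t ≤ n → S t ⊆ Finset.Icc 1 (n + 1) :=
    fun t h1 h2 => (hS12 t h1 h2).1
  have hS2 : ∀ t, 1 ≤ t → t ≤ n → (S t).card = t :=
    fun t h1 h2 => (hS12 t h1 h2).2
  have hstep : ∀ i t, 1 ≤ t → t + 1 ≤ n → i ∈ S t → i ∉ R t → i ∈ S (t + 1) := by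
    intro i t h1 h2 hS hR
    have h3 := hsub t h1 (by omega) hS
    rw [Finset.mem_union] at h3
    tauto
  have hexit : ∀ j t, 1 ≤ t → t + 1 ≤ n → j ∈ S t → j ∉ S (t + 1) → j ∈ R t := by
    intro j t h1 h2 hS hnS
    have h3 := hsub t h1 (by omega) hS
    rw [Finset.mem_union] at h3
    tauto
  rw [AdmMut.mut_coe, AdmMut.sing_coe hn hR1, Set.ncard_coe_finset, Set.ncard_coe_finset,
    AdmMut.count_eq hn hS1 hS2 hstep hexit, AdmMut.baseF_card hn hS1 hS2]
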